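/- arXiv:1804.01658 — 2 statements merged into one kernel-verified Lean document; each statement's English description precedes it below -/
import Mathlib

section
/- In the tree setting described in the context, suppose additionally that A* := limsup_{n→∞} (1/n)∑_{i=1}^{n} aᵢ is finite and set G_* := liminf_{n→∞} (∏_{i=1}^{n} aᵢ)^{1/n}, and let 𝒞 = ⋂_{n≥0} ⋃_{θ of length n} J_θ. Then there exists a Borel probability measure μ supported on 𝒞 such that μ(𝒞 ∩ J_θ) = 1/(κ₁κ₂⋯κₙ) for every word θ of length n, and this measure satisfies, for every x ∈ 𝒞, liminf_{r→0⁺} log μ(B(x,r))/log r ≥ (log(b₁/2) + log G_*)/(d₂ · A*), where B(x,r) denotes the open ball of radius r centered at x. -/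
noncomputable section

namespace CantorTree

/-- `κ n = ⌊b₁ · a n⌋`. -/
def kappa (b₁ : ℝ) (a : ℕ → ℝ) (n : ℕ) : ℕ := ⌊b₁ * a n⌋₊

/-- A word `θ = ω₁⋯ωₙ` (represented with 0-based indices) is valid when its
`i`-th letter lies in `{1, …, κ_{i+1}}`. -/
def ValidWord (b₁ : ℝ) (a : ℕ → ℝ) (n : ℕ) (θ : Fin n → ℕ) : Prop :=
  ∀ i : Fin n, 1 ≤ θ i ∧ θ i ≤ kappa b₁ a ((i : ℕ) + 1)

/-- The tree setting: a family of nonempty compact intervals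
`J_θ = [L n θ, R n θ]` of positive length indexed by valid words,
satisfying the nesting, gap and length-ratio conditions. -/
structure TreeFamily (b₁ c₁ d₁ d₂ : ℝ) (a : ℕ → ℝ)
    (L R : ∀ n : ℕ, (Fin n → ℕ) → ℝ) : Prop where
  b₁_pos : 0 < b₁
  c₁_pos : 0 < c₁
  d₁_pos : 0 < d₁
  d₁_le_d₂ : d₁ ≤ d₂
  a_lower : ∀ n : ℕ, 1 ≤ n → 2 / b₁ ≤ a n
  a_exp : ∀ n : ℕ, 1 ≤ n → 2 * a n ≤ c₁ * Real.exp (d₁ * a n)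
  len_pos : ∀ n θ, ValidWord b₁ a n θ → L n θ < R n θ
  nested : ∀ n θ, ValidWord b₁ a n θ → ∀ i : ℕ, 1 ≤ i → i ≤ kappa b₁ a (n + 1) →
    L n θ ≤ L (n + 1) (Fin.snoc θ i) ∧ R (n + 1) (Fin.snoc θ i) ≤ R n θ
  gap : ∀ n θ, ValidWord b₁ a n θ → ∀ i : ℕ, 1 ≤ i → i + 1 ≤ kappa b₁ a (n + 1) →
    R (n + 1) (Fin.snoc θ i) < L (n + 1) (Fin.snoc θ (i + 1)) ∧
    c₁ * (R n θ - L n θ) / a (n + 1) ≤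
      L (n + 1) (Fin.snoc θ (i + 1)) - R (n + 1) (Fin.snoc θ i)
  ratio : ∀ n θ, ValidWord b₁ a n θ → ∀ i : ℕ, 1 ≤ i → i ≤ kappa b₁ a (n + 1) →
    Real.exp (-d₂ * a (n + 1)) * (R n θ - L n θ) ≤
      R (n + 1) (Fin.snoc θ i) - L (n + 1) (Fin.snoc θ i) ∧
    R (n + 1) (Fin.snoc θ i) - L (n + 1) (Fin.snoc θ i) ≤
      Real.exp (-d₁ * a (n + 1)) * (R n θ - L n θ)

/-- The Cantor set `𝒞 = ⋂ₙ ⋃_{θ of length n} J_θ`. -/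
def cantorSet (b₁ : ℝ) (a : ℕ → ℝ) (L R : ∀ n : ℕ, (Fin n → ℕ) → ℝ) : Set ℝ :=
  ⋂ n : ℕ, ⋃ θ : Fin n → ℕ, ⋃ _ : ValidWord b₁ a n θ, Set.Icc (L n θ) (R n θ)

end CantorTree

open CantorTree
open scoped ENNReal

open CantorTree Set
open scoped ENNReal

namespace CantorProof

variable {b₁ c₁ d₁ d₂ : ℝ} {a : ℕ → ℝ} {L R : ∀ n : ℕ, (Fin n → ℕ) → ℝ}

section Basic
variable (hT : TreeFamily b₁ c₁ d₁ d₂ a L R)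
include hT

lemma ba_ge_two {n : ℕ} (hn : 1 ≤ n) : 2 ≤ b₁ * a n := by
  have := hT.a_lower n hn
  rw [div_le_iff₀ hT.b₁_pos] at this
  linarith [this]

lemma a_pos {n : ℕ} (hn : 1 ≤ n) : 0 < a n := by
  have h2 := ba_ge_two hT hn
  nlinarith [hT.b₁_pos]

lemma kappa_ge_two {n : ℕ} (hn : 1 ≤ n) : 2 ≤ kappa b₁ a n := by
  have h2 := ba_ge_two hT hn
  have : (2:ℕ) ≤ ⌊b₁ * a n⌋₊ := Nat.le_floor (by exact_mod_cast h2)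
  exact this

lemma kappa_pos {n : ℕ} (hn : 1 ≤ n) : 0 < kappa b₁ a n :=
  lt_of_lt_of_le (by norm_num) (kappa_ge_two hT hn)

lemma kappa_ge_half {n : ℕ} (hn : 1 ≤ n) : b₁ * a n / 2 ≤ (kappa b₁ a n : ℝ) := by
  have h2 := ba_ge_two hT hn
  have hfl : b₁ * a n - 1 ≤ (⌊b₁ * a n⌋₊ : ℝ) := by
    have := Nat.sub_one_lt_floor (b₁ * a n)
    linarith
  have : b₁ * a n / 2 ≤ b₁ * a n - 1 := by linarith
  exact this.trans hfl


end Basic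

lemma validWord_snoc {n : ℕ} {θ : Fin n → ℕ} (hθ : ValidWord b₁ a n θ) {i : ℕ}
    (h1 : 1 ≤ i) (h2 : i ≤ kappa b₁ a (n + 1)) :
    ValidWord b₁ a (n + 1) (Fin.snoc θ i) := by
  intro j
  refine Fin.lastCases ?_ ?_ j
  · simpa [Fin.snoc_last] using ⟨h1, h2⟩
  · intro k
    simpa [Fin.snoc_castSucc] using hθ k

lemma validWord_init {n : ℕ} {ψ : Fin (n+1) → ℕ} (hψ : ValidWord b₁ a (n+1) ψ) :
    ValidWord b₁ a n (Fin.init ψ) := by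
  intro i
  simpa [Fin.init] using hψ i.castSucc

lemma validWord_last {n : ℕ} {ψ : Fin (n+1) → ℕ} (hψ : ValidWord b₁ a (n+1) ψ) :
    1 ≤ ψ (Fin.last n) ∧ ψ (Fin.last n) ≤ kappa b₁ a (n+1) := by
  simpa using hψ (Fin.last n)

section Basic2
variable (hT : TreeFamily b₁ c₁ d₁ d₂ a L R)
include hT

lemma subset_parent {n : ℕ} {ψ : Fin (n+1) → ℕ} (hψ : ValidWord b₁ a (n+1) ψ) :
    L n (Fin.init ψ) ≤ L (n+1) ψ ∧ R (n+1) ψ ≤ R n (Fin.init ψ) := by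
  have h := hT.nested n (Fin.init ψ) (validWord_init hψ) (ψ (Fin.last n))
    (validWord_last hψ).1 (validWord_last hψ).2
  rwa [Fin.snoc_init_self] at h

lemma ratio_parent {n : ℕ} {ψ : Fin (n+1) → ℕ} (hψ : ValidWord b₁ a (n+1) ψ) :
    Real.exp (-d₂ * a (n + 1)) * (R n (Fin.init ψ) - L n (Fin.init ψ)) ≤
      R (n+1) ψ - L (n+1) ψ ∧
    R (n+1) ψ - L (n+1) ψ ≤
      Real.exp (-d₁ * a (n + 1)) * (R n (Fin.init ψ) - L n (Fin.init ψ)) := by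
  have h := hT.ratio n (Fin.init ψ) (validWord_init hψ) (ψ (Fin.last n))
    (validWord_last hψ).1 (validWord_last hψ).2
  rwa [Fin.snoc_init_self] at h

/-- Siblings are strictly ordered with a gap. -/
lemma sibling_gap {n : ℕ} {θ : Fin n → ℕ} (hθ : ValidWord b₁ a n θ) {i j : ℕ}
    (h1 : 1 ≤ i) (hij : i < j) (hj : j ≤ kappa b₁ a (n + 1)) :
    R (n + 1) (Fin.snoc θ i) + c₁ * (R n θ - L n θ) / a (n + 1) ≤
      L (n + 1) (Fin.snoc θ j) := by
  induction j with
  | zero => omega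
  | succ j ih =>
    rcases eq_or_lt_of_le (Nat.succ_le_of_lt hij) with h | h
    · have := hT.gap n θ hθ i h1 (by omega)
      have h' : i + 1 = j + 1 := h
      rw [← h']
      linarith [this.2]
    · have hij' : i < j := by omega
      have hj' : j ≤ kappa b₁ a (n+1) := by omega
      have := ih hij' hj'
      have h2 : R (n+1) (Fin.snoc θ j) < L (n+1) (Fin.snoc θ (j+1)) :=
        (hT.gap n θ hθ j (by omega) hj).1
      have h3 : L (n+1) (Fin.snoc θ j) ≤ R (n+1) (Fin.snoc θ j) :=
        le_of_lt (hT.len_pos (n+1) _ (validWord_snoc hθ (by omega) hj'))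
      linarith

/-- If x lies in two sibling intervals, the last letters agree. -/
lemma last_eq_of_mem {x : ℝ} {n : ℕ} {θ : Fin n → ℕ} (hθ : ValidWord b₁ a n θ) {i j : ℕ}
    (hi1 : 1 ≤ i) (hik : i ≤ kappa b₁ a (n+1)) (hj1 : 1 ≤ j) (hjk : j ≤ kappa b₁ a (n+1))
    (hxi : x ∈ Icc (L (n+1) (Fin.snoc θ i)) (R (n+1) (Fin.snoc θ i)))
    (hxj : x ∈ Icc (L (n+1) (Fin.snoc θ j)) (R (n+1) (Fin.snoc θ j))) : i = j := by
  have hgpos : 0 < c₁ * (R n θ - L n θ) / a (n+1) := by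
    have hlen := hT.len_pos n _ hθ
    have ha := a_pos hT (n := n+1) (by omega)
    have hc := hT.c₁_pos
    have hlen' : 0 < R n θ - L n θ := sub_pos.2 hlen
    positivity
  by_contra hne
  rcases lt_or_gt_of_ne hne with h | h
  · have hgap := sibling_gap hT hθ hi1 h hjk
    linarith [hxi.2, hxj.1]
  · have hgap := sibling_gap hT hθ hj1 h hik
    linarith [hxj.2, hxi.1]

/-- Distinct valid words of the same length have disjoint intervals. -/
lemma word_eq_of_mem {x : ℝ} : ∀ {n : ℕ} {θ φ : Fin n → ℕ}, ValidWord b₁ a n θ →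
    ValidWord b₁ a n φ → x ∈ Icc (L n θ) (R n θ) → x ∈ Icc (L n φ) (R n φ) → θ = φ := by
  intro n
  induction n with
  | zero => intro θ φ _ _ _ _; exact Subsingleton.elim θ φ
  | succ n ih =>
    intro θ φ hθ hφ hxθ hxφ
    have hpθ : x ∈ Icc (L n (Fin.init θ)) (R n (Fin.init θ)) :=
      ⟨le_trans (subset_parent hT hθ).1 hxθ.1, le_trans hxθ.2 (subset_parent hT hθ).2⟩
    have hpφ : x ∈ Icc (L n (Fin.init φ)) (R n (Fin.init φ)) :=
      ⟨le_trans (subset_parent hT hφ).1 hxφ.1, le_trans hxφ.2 (subset_parent hT hφ).2⟩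
    have hinit : Fin.init θ = Fin.init φ := ih (validWord_init hθ) (validWord_init hφ) hpθ hpφ
    have hi := validWord_last hθ
    have hj := validWord_last hφ
    have hxθ' : x ∈ Icc (L (n+1) (Fin.snoc (Fin.init θ) (θ (Fin.last n))))
        (R (n+1) (Fin.snoc (Fin.init θ) (θ (Fin.last n)))) := by
      rwa [Fin.snoc_init_self]
    have hxφ' : x ∈ Icc (L (n+1) (Fin.snoc (Fin.init θ) (φ (Fin.last n))))
        (R (n+1) (Fin.snoc (Fin.init θ) (φ (Fin.last n)))) := by
      rw [hinit, Fin.snoc_init_self]; exact hxφ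
    have key : θ (Fin.last n) = φ (Fin.last n) :=
      last_eq_of_mem hT (validWord_init hθ) hi.1 hi.2 hj.1 hj.2 hxθ' hxφ'
    calc θ = Fin.snoc (Fin.init θ) (θ (Fin.last n)) := (Fin.snoc_init_self θ).symm
    _ = Fin.snoc (Fin.init φ) (φ (Fin.last n)) := by rw [hinit, key]
    _ = φ := Fin.snoc_init_self φ

end Basic2
end CantorProof

-- digits, cylinders
namespace CantorProof
open CantorTree Set
open scoped ENNReal

variable (b₁ : ℝ) (a : ℕ → ℝ)

/-- iterated digit map -/
def gg : ℕ → ℝ → ℝ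
  | 0 => id
  | n+1 => fun t => Int.fract ((kappa b₁ a (n+1) : ℝ) * gg n t)

/-- the `n`-th letter (0-based position, value in `{1,…,κ(n+1)}`). -/
def digit (n : ℕ) (t : ℝ) : ℕ := ⌊(kappa b₁ a (n+1) : ℝ) * gg b₁ a n t⌋₊ + 1

def digitsVec (n : ℕ) (t : ℝ) : Fin n → ℕ := fun i => digit b₁ a i t

/-- `∏_{i=1}^n κᵢ⁻¹` -/
def pphi (n : ℕ) : ℝ := ∏ i ∈ Finset.Icc 1 n, ((kappa b₁ a i : ℝ))⁻¹

lemma measurable_gg (n : ℕ) : Measurable (gg b₁ a n) := by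
  induction n with
  | zero => exact measurable_id
  | succ n ih => exact measurable_fract.comp (ih.const_mul _)

lemma measurable_digit (n : ℕ) : Measurable (digit b₁ a n) :=
  (((measurable_gg b₁ a n).const_mul _).nat_floor).add_const 1

variable {b₁ a}

lemma gg_mem {t : ℝ} (ht : t ∈ Ico (0:ℝ) 1) (n : ℕ) : gg b₁ a n t ∈ Ico (0:ℝ) 1 := by
  induction n with
  | zero => exact ht
  | succ n ih => exact ⟨Int.fract_nonneg _, Int.fract_lt_one _⟩

lemma digitsVec_succ (n : ℕ) (t : ℝ) :
    digitsVec b₁ a (n+1) t = Fin.snoc (digitsVec b₁ a n t) (digit b₁ a n t) := by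
  funext i
  refine Fin.lastCases ?_ ?_ i
  · simp [digitsVec, Fin.snoc_last]
  · intro k; simp [digitsVec, Fin.snoc_castSucc]

lemma digitsVec_init (n : ℕ) (t : ℝ) :
    Fin.init (digitsVec b₁ a (n+1) t) = digitsVec b₁ a n t := by
  rw [digitsVec_succ, Fin.init_snoc]

section withT
variable {c₁ d₁ d₂ : ℝ} {L R : ∀ n : ℕ, (Fin n → ℕ) → ℝ}
variable (hT : TreeFamily b₁ c₁ d₁ d₂ a L R)
include hT

lemma digit_valid {t : ℝ} (ht : t ∈ Ico (0:ℝ) 1) (n : ℕ) :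
    1 ≤ digit b₁ a n t ∧ digit b₁ a n t ≤ kappa b₁ a (n+1) := by
  constructor
  · simp [digit]
  · have hg := gg_mem (b₁ := b₁) (a := a) ht n
    have hκ : 0 < kappa b₁ a (n+1) := kappa_pos hT (by omega)
    have hκR : (0:ℝ) < (kappa b₁ a (n+1) : ℝ) := by exact_mod_cast hκ
    have : ⌊(kappa b₁ a (n+1) : ℝ) * gg b₁ a n t⌋₊ < kappa b₁ a (n+1) := by
      rw [Nat.floor_lt (mul_nonneg hκR.le hg.1)]
      nlinarith [hg.2, hg.1]
    simp only [digit]; omega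

lemma digitsVec_valid {t : ℝ} (ht : t ∈ Ico (0:ℝ) 1) (n : ℕ) :
    ValidWord b₁ a n (digitsVec b₁ a n t) := fun i => digit_valid hT ht i

lemma pphi_pos (n : ℕ) : 0 < pphi b₁ a n := by
  refine Finset.prod_pos fun i hi => ?_
  have h0 : 0 < kappa b₁ a i := kappa_pos hT (Finset.mem_Icc.1 hi).1
  have : (0:ℝ) < (kappa b₁ a i : ℝ) := by exact_mod_cast h0
  positivity

/-- cylinder structure lemma -/
lemma cyl_struct : ∀ (n : ℕ) (θ : Fin n → ℕ), ValidWord b₁ a n θ →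
    ∃ s : ℝ, {t : ℝ | t ∈ Ico (0:ℝ) 1 ∧ digitsVec b₁ a n t = θ}
        = Ico s (s + pphi b₁ a n) ∧
      ∀ t ∈ Ico s (s + pphi b₁ a n), gg b₁ a n t = (t - s) / pphi b₁ a n := by
  intro n
  induction n with
  | zero =>
    intro θ _
    refine ⟨0, ?_, ?_⟩
    · ext t
      have h1 : pphi b₁ a 0 = 1 := by simp [pphi]
      simp [h1, Subsingleton.elim (digitsVec b₁ a 0 t) θ]
    · intro t ht
      have h1 : pphi b₁ a 0 = 1 := by simp [pphi]
      rw [h1] at ht ⊢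
      simp [gg]
  | succ n ih =>
    intro θ hθ
    obtain ⟨s, hset, hgg⟩ := ih (Fin.init θ) (validWord_init hθ)
    set p := pphi b₁ a n with hp
    have hppos : 0 < p := pphi_pos hT n
    set κ := kappa b₁ a (n+1) with hκdef
    have hκ2 : 2 ≤ κ := kappa_ge_two hT (by omega)
    have hκpos : (0:ℝ) < (κ:ℝ) := by
      have : 0 < κ := by omega
      exact_mod_cast this
    set q := p / (κ:ℝ) with hqdef
    have hqpos : 0 < q := div_pos hppos hκpos
    have hpq : p = q * κ := by rw [hqdef]; field_simp
    set i := θ (Fin.last n) with hidef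
    have hi := validWord_last hθ
    rw [← hidef, ← hκdef] at hi
    have hi1 : (1:ℝ) ≤ (i:ℝ) := by exact_mod_cast hi.1
    have hiκ : (i:ℝ) ≤ (κ:ℝ) := by exact_mod_cast hi.2
    have hpsucc : pphi b₁ a (n+1) = q := by
      rw [pphi, Finset.prod_Icc_succ_top (by omega : 1 ≤ n+1), ← pphi, ← hp, ← hκdef,
        hqdef, div_eq_mul_inv]
    set s' := s + ((i:ℝ) - 1) * q with hs'def
    -- main pointwise equivalence on the parent cylinder
    have main : ∀ t ∈ Ico s (s + p),
        (digit b₁ a n t = i ↔ t ∈ Ico s' (s' + q)) ∧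
        (t ∈ Ico s' (s' + q) → gg b₁ a (n+1) t = (t - s') / q) := by
      intro t ht
      have hu := hgg t ht
      rw [mem_Ico] at ht
      set u := (t - s) / p with hudef
      have hu0 : 0 ≤ u := div_nonneg (by linarith) hppos.le
      have htu : t = s + u * (q * κ) := by
        rw [← hpq, hudef]; field_simp; ring
      have hbound : ((i:ℝ) - 1 ≤ (κ:ℝ) * u ∧ (κ:ℝ) * u < (i:ℝ)) ↔ t ∈ Ico s' (s' + q) := by
        rw [mem_Ico, hs'def]
        constructor
        · rintro ⟨h1, h2⟩
          constructor
          · nlinarith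
          · nlinarith
        · rintro ⟨h1, h2⟩
          constructor
          · nlinarith
          · nlinarith
      have hdigit_iff : digit b₁ a n t = i ↔ ((i:ℝ) - 1 ≤ (κ:ℝ) * u ∧ (κ:ℝ) * u < (i:ℝ)) := by
        rw [digit, ← hκdef, hu]
        have hnn : 0 ≤ (κ:ℝ) * u := mul_nonneg hκpos.le hu0
        constructor
        · intro hfl
          have hfl' : ⌊(κ:ℝ) * u⌋₊ = i - 1 := by omega
          rw [Nat.floor_eq_iff hnn] at hfl'
          have hc : ((i - 1 : ℕ) : ℝ) = (i:ℝ) - 1 := by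
            rw [Nat.cast_sub hi.1]; norm_num
          rw [hc] at hfl'
          exact ⟨hfl'.1, by linarith [hfl'.2]⟩
        · rintro ⟨h1, h2⟩
          have hfl' : ⌊(κ:ℝ) * u⌋₊ = i - 1 := by
            rw [Nat.floor_eq_iff hnn]
            have hc : ((i - 1 : ℕ) : ℝ) = (i:ℝ) - 1 := by
              rw [Nat.cast_sub hi.1]; norm_num
            rw [hc]
            exact ⟨h1, by linarith⟩
          omega
      refine ⟨hdigit_iff.trans hbound, ?_⟩
      intro hts'
      have hb := hbound.2 hts'
      -- gg (n+1) t = fract (κ * gg n t) = κ u - (i - 1)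
      have hfloor : ⌊(κ:ℝ) * u⌋ = (i:ℤ) - 1 := by
        rw [Int.floor_eq_iff]
        push_cast
        exact ⟨hb.1, by linarith [hb.2]⟩
      have hgg1 : gg b₁ a (n+1) t = (κ:ℝ) * u - ((i:ℝ) - 1) := by
        show Int.fract ((κ:ℝ) * gg b₁ a n t) = _
        rw [hu, ← Int.self_sub_floor, hfloor]
        push_cast; ring
      rw [hgg1]
      rw [eq_div_iff hqpos.ne']
      rw [hs'def, htu]; ring
    refine ⟨s', ?_, ?_⟩
    · ext t
      simp only [mem_setOf_eq, hpsucc]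
      constructor
      · rintro ⟨ht01, hdig⟩
        have htn : digitsVec b₁ a n t = Fin.init θ := by
          rw [← digitsVec_init n t, hdig]
        have htcyl : t ∈ Ico s (s + p) := by rw [← hset]; exact ⟨ht01, htn⟩
        have hlast : digit b₁ a n t = i := by
          rw [hidef, ← hdig, digitsVec_succ, Fin.snoc_last]
        exact ((main t htcyl).1).1 hlast
      · intro hts'
        rw [mem_Ico] at hts'
        have htcyl : t ∈ Ico s (s + p) := by
          rw [mem_Ico]
          constructor
          · have : 0 ≤ ((i:ℝ) - 1) * q := mul_nonneg (by linarith) hqpos.le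
            rw [hs'def] at hts'; linarith [hts'.1]
          · have : s' + q ≤ s + p := by
              rw [hs'def, hpq]; nlinarith
            linarith [hts'.2]
        have hparent := (hset ▸ htcyl : t ∈ {t : ℝ | t ∈ Ico (0:ℝ) 1 ∧ digitsVec b₁ a n t = Fin.init θ})
        have hlast : digit b₁ a n t = i := ((main t htcyl).1).2 (by rw [mem_Ico]; exact hts')
        refine ⟨hparent.1, ?_⟩
        rw [digitsVec_succ, hparent.2, hlast, hidef, Fin.snoc_init_self]
    · intro t hts'
      rw [hpsucc] at hts'
      have htcyl : t ∈ Ico s (s + p) := by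
        rw [mem_Ico] at hts' ⊢
        constructor
        · have : 0 ≤ ((i:ℝ) - 1) * q := mul_nonneg (by linarith) hqpos.le
          rw [hs'def] at hts'; linarith [hts'.1]
        · have : s' + q ≤ s + p := by rw [hs'def, hpq]; nlinarith
          linarith [hts'.2]
      rw [hpsucc]
      exact (main t htcyl).2 hts'

end withT
end CantorProof

-- the map ff and the measure
namespace CantorProof
open CantorTree Set Filter MeasureTheory
open scoped ENNReal Topology

variable {b₁ c₁ d₁ d₂ : ℝ} {a : ℕ → ℝ} {L R : ∀ n : ℕ, (Fin n → ℕ) → ℝ}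

/-- approximations -/
def ffAux (b₁ : ℝ) (a : ℕ → ℝ) (L : ∀ n : ℕ, (Fin n → ℕ) → ℝ) (n : ℕ) (t : ℝ) : ℝ :=
  if t ∈ Ico (0:ℝ) 1 then L n (digitsVec b₁ a n t) else 0

/-- the parametrization of the Cantor set -/
def ff (b₁ : ℝ) (a : ℕ → ℝ) (L : ∀ n : ℕ, (Fin n → ℕ) → ℝ) (t : ℝ) : ℝ :=
  ⨆ n, ffAux b₁ a L n t

section withT
variable (hT : TreeFamily b₁ c₁ d₁ d₂ a L R)
include hT

lemma ffAux_mono {t : ℝ} : Monotone fun n => ffAux b₁ a L n t := by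
  apply monotone_nat_of_le_succ
  intro n
  unfold ffAux
  by_cases ht : t ∈ Ico (0:ℝ) 1
  · rw [if_pos ht, if_pos ht]
    have hψ := digitsVec_valid hT ht (n+1)
    have := (subset_parent hT hψ).1
    rwa [digitsVec_init] at this
  · rw [if_neg ht, if_neg ht]

lemma ffAux_le_R {t : ℝ} (ht : t ∈ Ico (0:ℝ) 1) (n m : ℕ) :
    ffAux b₁ a L m t ≤ R n (digitsVec b₁ a n t) := by
  have hanti : ∀ k, R (k+1) (digitsVec b₁ a (k+1) t) ≤ R k (digitsVec b₁ a k t) := by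
    intro k
    have hψ := digitsVec_valid hT ht (k+1)
    have := (subset_parent hT hψ).2
    rwa [digitsVec_init] at this
  have hanti' : Antitone fun k => R k (digitsVec b₁ a k t) := antitone_nat_of_succ_le hanti
  rcases le_total m n with h | h
  · calc ffAux b₁ a L m t ≤ ffAux b₁ a L n t := ffAux_mono hT (by exact h)
    _ = L n (digitsVec b₁ a n t) := if_pos ht
    _ ≤ R n (digitsVec b₁ a n t) := (hT.len_pos n _ (digitsVec_valid hT ht n)).le
  · calc ffAux b₁ a L m t = L m (digitsVec b₁ a m t) := if_pos ht
    _ ≤ R m (digitsVec b₁ a m t) := (hT.len_pos m _ (digitsVec_valid hT ht m)).le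
    _ ≤ R n (digitsVec b₁ a n t) := hanti' h

lemma ffAux_bdd {t : ℝ} (ht : t ∈ Ico (0:ℝ) 1) :
    BddAbove (range fun n => ffAux b₁ a L n t) := by
  refine ⟨R 0 (digitsVec b₁ a 0 t), ?_⟩
  rintro x ⟨m, rfl⟩
  exact ffAux_le_R hT ht 0 m

lemma ff_mem_Icc {t : ℝ} (ht : t ∈ Ico (0:ℝ) 1) (n : ℕ) :
    ff b₁ a L t ∈ Icc (L n (digitsVec b₁ a n t)) (R n (digitsVec b₁ a n t)) := by
  constructor
  · have := le_ciSup (ffAux_bdd hT ht) n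
    calc L n (digitsVec b₁ a n t) = ffAux b₁ a L n t := (if_pos ht).symm
    _ ≤ ff b₁ a L t := le_ciSup (ffAux_bdd hT ht) n
  · exact ciSup_le fun m => ffAux_le_R hT ht n m

lemma ff_mem_cantor {t : ℝ} (ht : t ∈ Ico (0:ℝ) 1) :
    ff b₁ a L t ∈ cantorSet b₁ a L R := by
  refine mem_iInter.2 fun n => ?_
  exact mem_iUnion.2 ⟨digitsVec b₁ a n t,
    mem_iUnion.2 ⟨digitsVec_valid hT ht n, ff_mem_Icc hT ht n⟩⟩

lemma measurable_ffAux (n : ℕ) : Measurable (ffAux b₁ a L n) := by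
  unfold ffAux
  refine Measurable.ite measurableSet_Ico ?_ measurable_const
  exact (measurable_of_countable (L n)).comp
    (measurable_pi_lambda _ fun i => measurable_digit b₁ a i)

lemma measurable_ff : Measurable (ff b₁ a L) := by
  refine measurable_of_tendsto_metrizable (f := ffAux b₁ a L) (measurable_ffAux hT) ?_
  rw [tendsto_pi_nhds]
  intro t
  by_cases ht : t ∈ Ico (0:ℝ) 1
  · exact tendsto_atTop_ciSup (ffAux_mono hT) (ffAux_bdd hT ht)
  · have hz : ∀ n, ffAux b₁ a L n t = 0 := fun n => if_neg ht
    have hff : ff b₁ a L t = 0 := by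
      rw [ff]; simp [hz]
    rw [hff]
    simp only [hz]
    exact tendsto_const_nhds

/-- the measure -/
def mu (b₁ : ℝ) (a : ℕ → ℝ) (L : ∀ n : ℕ, (Fin n → ℕ) → ℝ) : Measure ℝ :=
  Measure.map (ff b₁ a L) (volume.restrict (Ico (0:ℝ) 1))

lemma measurable_cantor : MeasurableSet (cantorSet b₁ a L R) := by
  refine MeasurableSet.iInter fun n => MeasurableSet.iUnion fun θ =>
    MeasurableSet.iUnion fun _ => measurableSet_Icc

lemma mu_prob : IsProbabilityMeasure (mu b₁ a L) := by
  have : IsProbabilityMeasure (volume.restrict (Ico (0:ℝ) 1)) := by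
    constructor
    rw [Measure.restrict_apply_univ]
    simp
  exact Measure.isProbabilityMeasure_map (measurable_ff hT).aemeasurable

lemma mu_compl_cantor : mu b₁ a L (cantorSet b₁ a L R)ᶜ = 0 := by
  rw [mu, Measure.map_apply (measurable_ff hT) (measurable_cantor hT).compl,
    Measure.restrict_apply (((measurable_ff hT) (measurable_cantor hT).compl))]
  convert measure_empty
  · ext t
    simp only [mem_inter_iff, mem_preimage, mem_compl_iff, mem_empty_iff_false, iff_false,
      not_and]
    intro hc ht
    exact hc (ff_mem_cantor hT ht)
  · infer_instance

lemma mu_Icc (n : ℕ) (θ : Fin n → ℕ) (hθ : ValidWord b₁ a n θ) :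
    mu b₁ a L (Icc (L n θ) (R n θ)) = ENNReal.ofReal (pphi b₁ a n) := by
  rw [mu, Measure.map_apply (measurable_ff hT) measurableSet_Icc,
    Measure.restrict_apply ((measurable_ff hT) measurableSet_Icc)]
  obtain ⟨s, hset, -⟩ := cyl_struct hT n θ hθ
  have : ff b₁ a L ⁻¹' Icc (L n θ) (R n θ) ∩ Ico 0 1 = Ico s (s + pphi b₁ a n) := by
    rw [← hset]
    ext t
    simp only [mem_inter_iff, mem_preimage, mem_setOf_eq]
    constructor
    · rintro ⟨hf, ht⟩
      refine ⟨ht, ?_⟩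
      exact word_eq_of_mem hT (digitsVec_valid hT ht n) hθ (ff_mem_Icc hT ht n) hf
    · rintro ⟨ht, hd⟩
      refine ⟨?_, ht⟩
      have := ff_mem_Icc hT ht n
      rwa [hd] at this
  rw [this, Real.volume_Ico]
  congr 1
  ring

lemma mu_cantor_Icc (n : ℕ) (θ : Fin n → ℕ) (hθ : ValidWord b₁ a n θ) :
    mu b₁ a L (cantorSet b₁ a L R ∩ Icc (L n θ) (R n θ)) =
      1 / ∏ i ∈ Finset.Icc 1 n, (kappa b₁ a i : ℝ≥0∞) := by
  rw [inter_comm, measure_inter_conull (mu_compl_cantor hT), mu_Icc hT n θ hθ]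
  rw [pphi]
  rw [ENNReal.ofReal_prod_of_nonneg]
  · rw [one_div, ENNReal.prod_inv_distrib (fun i _ j _ _ => Or.inr (ENNReal.natCast_ne_top _))]
    refine Finset.prod_congr rfl fun i hi => ?_
    have h0 : 0 < kappa b₁ a i := kappa_pos hT (Finset.mem_Icc.1 hi).1
    have h0R : (0:ℝ) < (kappa b₁ a i : ℝ) := by exact_mod_cast h0
    rw [ENNReal.ofReal_inv_of_pos h0R, ENNReal.ofReal_natCast]
  · intro i hi
    have h0 : 0 < kappa b₁ a i := kappa_pos hT (Finset.mem_Icc.1 hi).1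
    have h0R : (0:ℝ) < (kappa b₁ a i : ℝ) := by exact_mod_cast h0
    positivity

end withT
end CantorProof

-- branch of a point in the Cantor set
namespace CantorProof
open CantorTree Set Filter MeasureTheory
open scoped ENNReal Topology

variable {b₁ c₁ d₁ d₂ : ℝ} {a : ℕ → ℝ} {L R : ∀ n : ℕ, (Fin n → ℕ) → ℝ}

open Classical in
def branch (b₁ : ℝ) (a : ℕ → ℝ) (L R : ∀ n : ℕ, (Fin n → ℕ) → ℝ) (x : ℝ) (n : ℕ) :
    Fin n → ℕ :=
  if h : ∃ θ, ValidWord b₁ a n θ ∧ x ∈ Icc (L n θ) (R n θ) then h.choose else fun _ => 1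

def mlen (b₁ : ℝ) (a : ℕ → ℝ) (L R : ∀ n : ℕ, (Fin n → ℕ) → ℝ) (x : ℝ) (n : ℕ) : ℝ :=
  R n (branch b₁ a L R x n) - L n (branch b₁ a L R x n)

lemma exists_word {x : ℝ} (hx : x ∈ cantorSet b₁ a L R) (n : ℕ) :
    ∃ θ, ValidWord b₁ a n θ ∧ x ∈ Icc (L n θ) (R n θ) := by
  have := mem_iInter.1 hx n
  obtain ⟨θ, hθ⟩ := mem_iUnion.1 this
  obtain ⟨hv, hmem⟩ := mem_iUnion.1 hθ
  exact ⟨θ, hv, hmem⟩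

lemma branch_spec {x : ℝ} (hx : x ∈ cantorSet b₁ a L R) (n : ℕ) :
    ValidWord b₁ a n (branch b₁ a L R x n) ∧
      x ∈ Icc (L n (branch b₁ a L R x n)) (R n (branch b₁ a L R x n)) := by
  classical
  rw [branch, dif_pos (exists_word hx n)]
  exact (exists_word hx n).choose_spec

section withT
variable (hT : TreeFamily b₁ c₁ d₁ d₂ a L R)
include hT

lemma branch_unique {x : ℝ} (hx : x ∈ cantorSet b₁ a L R) {n : ℕ} {θ : Fin n → ℕ}
    (hθ : ValidWord b₁ a n θ) (hmem : x ∈ Icc (L n θ) (R n θ)) :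
    branch b₁ a L R x n = θ :=
  word_eq_of_mem hT (branch_spec hx n).1 hθ (branch_spec hx n).2 hmem

lemma branch_succ {x : ℝ} (hx : x ∈ cantorSet b₁ a L R) (n : ℕ) :
    Fin.init (branch b₁ a L R x (n+1)) = branch b₁ a L R x n := by
  have h1 := branch_spec hx (n+1)
  have hpar := subset_parent hT h1.1
  have hmem : x ∈ Icc (L n (Fin.init (branch b₁ a L R x (n+1))))
      (R n (Fin.init (branch b₁ a L R x (n+1)))) :=
    ⟨le_trans hpar.1 h1.2.1, le_trans h1.2.2 hpar.2⟩
  exact (branch_unique hT hx (validWord_init h1.1) hmem).symm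

lemma mlen_pos {x : ℝ} (hx : x ∈ cantorSet b₁ a L R) (n : ℕ) :
    0 < mlen b₁ a L R x n :=
  sub_pos.2 (hT.len_pos n _ (branch_spec hx n).1)

lemma mlen_ratio {x : ℝ} (hx : x ∈ cantorSet b₁ a L R) (n : ℕ) :
    Real.exp (-d₂ * a (n+1)) * mlen b₁ a L R x n ≤ mlen b₁ a L R x (n+1) ∧
    mlen b₁ a L R x (n+1) ≤ Real.exp (-d₁ * a (n+1)) * mlen b₁ a L R x n := by
  have h1 := branch_spec hx (n+1)
  have := ratio_parent hT h1.1
  rwa [branch_succ hT hx n] at this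

lemma mlen_anti {x : ℝ} (hx : x ∈ cantorSet b₁ a L R) :
    Antitone (mlen b₁ a L R x) := by
  apply antitone_nat_of_succ_le
  intro n
  have h := (mlen_ratio hT hx n).2
  have hexp : Real.exp (-d₁ * a (n+1)) ≤ 1 := by
    rw [Real.exp_le_one_iff]
    have ha := a_pos hT (n := n+1) (by omega)
    nlinarith [hT.d₁_pos]
  nlinarith [mlen_pos hT hx n]

lemma mlen_le_pow {x : ℝ} (hx : x ∈ cantorSet b₁ a L R) (n : ℕ) :
    mlen b₁ a L R x n ≤ mlen b₁ a L R x 0 * (Real.exp (-(d₁ * (2 / b₁))))^n := by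
  induction n with
  | zero => simp
  | succ n ih =>
    have h := (mlen_ratio hT hx n).2
    have hstep : Real.exp (-d₁ * a (n+1)) ≤ Real.exp (-(d₁ * (2 / b₁))) := by
      rw [Real.exp_le_exp]
      have ha := hT.a_lower (n+1) (by omega)
      nlinarith [hT.d₁_pos]
    have hm := mlen_pos hT hx n
    have hexp0 : (0:ℝ) < Real.exp (-(d₁ * (2 / b₁))) := Real.exp_pos _
    calc mlen b₁ a L R x (n+1) ≤ Real.exp (-d₁ * a (n+1)) * mlen b₁ a L R x n := h
    _ ≤ Real.exp (-(d₁ * (2 / b₁))) * mlen b₁ a L R x n := by nlinarith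
    _ ≤ Real.exp (-(d₁ * (2 / b₁))) * (mlen b₁ a L R x 0 * Real.exp (-(d₁ * (2 / b₁))) ^ n) := by
        nlinarith
    _ = mlen b₁ a L R x 0 * Real.exp (-(d₁ * (2 / b₁))) ^ (n+1) := by ring

lemma mlen_tendsto_zero {x : ℝ} (hx : x ∈ cantorSet b₁ a L R) {ε : ℝ} (hε : 0 < ε) :
    ∃ n, mlen b₁ a L R x n < ε := by
  have hq : Real.exp (-(d₁ * (2 / b₁))) < 1 := by
    rw [Real.exp_lt_one_iff]
    have := hT.d₁_pos; have := hT.b₁_pos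
    have : 0 < d₁ * (2 / b₁) := by positivity
    linarith
  have hq0 : 0 ≤ Real.exp (-(d₁ * (2 / b₁))) := (Real.exp_pos _).le
  have hm0 : 0 < mlen b₁ a L R x 0 := mlen_pos hT hx 0
  obtain ⟨n, hn⟩ := exists_pow_lt_of_lt_one (div_pos hε hm0) hq
  refine ⟨n, ?_⟩
  have hle := mlen_le_pow hT hx n
  have hn' : Real.exp (-(d₁ * (2 / b₁))) ^ n * mlen b₁ a L R x 0 < ε := (lt_div_iff₀ hm0).1 hn
  calc mlen b₁ a L R x n ≤ mlen b₁ a L R x 0 * Real.exp (-(d₁ * (2 / b₁)))^n := hle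
  _ < ε := by nlinarith

lemma mlen_lower {x : ℝ} (hx : x ∈ cantorSet b₁ a L R) (n : ℕ) :
    mlen b₁ a L R x 0 * Real.exp (-d₂ * ∑ i ∈ Finset.Icc 1 n, a i) ≤ mlen b₁ a L R x n := by
  induction n with
  | zero => simp
  | succ n ih =>
    have h := (mlen_ratio hT hx n).1
    have hsum : ∑ i ∈ Finset.Icc 1 (n+1), a i = (∑ i ∈ Finset.Icc 1 n, a i) + a (n+1) :=
      Finset.sum_Icc_succ_top (by omega) a
    rw [hsum]
    have : Real.exp (-d₂ * ((∑ i ∈ Finset.Icc 1 n, a i) + a (n+1)))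
        = Real.exp (-d₂ * ∑ i ∈ Finset.Icc 1 n, a i) * Real.exp (-d₂ * a (n+1)) := by
      rw [← Real.exp_add]; ring_nf
    rw [this]
    have hepos : (0:ℝ) < Real.exp (-d₂ * a (n+1)) := Real.exp_pos _
    nlinarith [Real.exp_pos (-d₂ * ∑ i ∈ Finset.Icc 1 n, a i), mlen_pos hT hx 0]

/-- separation: points of the Cantor set outside `J_{θⁿ(x)}` are far from `x`. -/
lemma separation {x : ℝ} (hx : x ∈ cantorSet b₁ a L R) {y : ℝ} (hy : y ∈ cantorSet b₁ a L R)
    {n : ℕ} (hout : y ∉ Icc (L n (branch b₁ a L R x n)) (R n (branch b₁ a L R x n))) :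
    2 * mlen b₁ a L R x n ≤ |x - y| := by
  classical
  have hex : ∃ k, y ∉ Icc (L k (branch b₁ a L R x k)) (R k (branch b₁ a L R x k)) := ⟨n, hout⟩
  have hk₀n : Nat.find hex ≤ n := Nat.find_min' hex hout
  have hk₀0 : Nat.find hex ≠ 0 := by
    intro h0
    have hsp := Nat.find_spec hex
    rw [h0] at hsp
    obtain ⟨φ, hφv, hyφ⟩ := exists_word hy 0
    rw [Subsingleton.elim (branch b₁ a L R x 0) φ] at hsp
    exact hsp hyφ
  obtain ⟨k, hk⟩ : ∃ k, Nat.find hex = k + 1 := ⟨Nat.find hex - 1, by omega⟩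
  have hkn : k + 1 ≤ n := by omega
  have hyin : y ∈ Icc (L k (branch b₁ a L R x k)) (R k (branch b₁ a L R x k)) :=
    not_not.1 (Nat.find_min hex (by omega : k < Nat.find hex))
  have hyout : y ∉ Icc (L (k+1) (branch b₁ a L R x (k+1))) (R (k+1) (branch b₁ a L R x (k+1))) := by
    have hsp := Nat.find_spec hex
    rwa [hk] at hsp
  obtain ⟨φ, hφv, hyφ⟩ := exists_word hy (k+1)
  have hφinit : Fin.init φ = branch b₁ a L R x k := by
    have hpar := subset_parent hT hφv
    have hmem : y ∈ Icc (L k (Fin.init φ)) (R k (Fin.init φ)) :=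
      ⟨le_trans hpar.1 hyφ.1, le_trans hyφ.2 hpar.2⟩
    exact word_eq_of_mem hT (validWord_init hφv) (branch_spec hx k).1 hmem hyin
  set i := branch b₁ a L R x (k+1) (Fin.last k) with hidef
  set j := φ (Fin.last k) with hjdef
  have hxsnoc : x ∈ Icc (L (k+1) (Fin.snoc (branch b₁ a L R x k) i))
      (R (k+1) (Fin.snoc (branch b₁ a L R x k) i)) := by
    have := (branch_spec hx (k+1)).2
    rwa [show Fin.snoc (branch b₁ a L R x k) i = branch b₁ a L R x (k+1) by
      rw [hidef, ← branch_succ hT hx k, Fin.snoc_init_self]]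
  have hysnoc : y ∈ Icc (L (k+1) (Fin.snoc (branch b₁ a L R x k) j))
      (R (k+1) (Fin.snoc (branch b₁ a L R x k) j)) := by
    rwa [show Fin.snoc (branch b₁ a L R x k) j = φ by
      rw [hjdef, ← hφinit, Fin.snoc_init_self]]
  have hij : i ≠ j := by
    intro h
    apply hyout
    have : φ = branch b₁ a L R x (k+1) := by
      calc φ = Fin.snoc (Fin.init φ) j := (Fin.snoc_init_self φ).symm
      _ = Fin.snoc (branch b₁ a L R x k) i := by rw [hφinit, h]
      _ = branch b₁ a L R x (k+1) := by
          rw [hidef, ← branch_succ hT hx k, Fin.snoc_init_self]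
    rwa [this] at hyφ
  have hiv := validWord_last (branch_spec hx (k+1)).1
  rw [← hidef] at hiv
  have hjv := validWord_last hφv
  rw [← hjdef] at hjv
  -- the gap quantity
  have hgap2 : 2 * mlen b₁ a L R x n ≤ c₁ * mlen b₁ a L R x k / a (k+1) := by
    have ha := a_pos hT (n := k+1) (by omega)
    have hae := hT.a_exp (k+1) (by omega)
    have hmk := mlen_pos hT hx k
    have h1 : 2 * Real.exp (-d₁ * a (k+1)) ≤ c₁ / a (k+1) := by
      rw [le_div_iff₀ ha]
      have he : Real.exp (-d₁ * a (k+1)) * Real.exp (d₁ * a (k+1)) = 1 := by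
        rw [← Real.exp_add]
        norm_num
      have hmul := mul_le_mul_of_nonneg_right hae (Real.exp_pos (-d₁ * a (k+1))).le
      have hc : c₁ * Real.exp (d₁ * a (k+1)) * Real.exp (-d₁ * a (k+1)) = c₁ := by
        rw [mul_assoc, ← Real.exp_add]
        norm_num
      rw [hc] at hmul
      linarith
    have h2 : mlen b₁ a L R x (k+1) ≤ Real.exp (-d₁ * a (k+1)) * mlen b₁ a L R x k :=
      (mlen_ratio hT hx k).2
    have h3 : mlen b₁ a L R x n ≤ mlen b₁ a L R x (k+1) := mlen_anti hT hx (by omega)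
    calc 2 * mlen b₁ a L R x n ≤ 2 * (Real.exp (-d₁ * a (k+1)) * mlen b₁ a L R x k) := by
          nlinarith
    _ ≤ (c₁ / a (k+1)) * mlen b₁ a L R x k := by
          nlinarith [mul_le_mul_of_nonneg_right h1 hmk.le]
    _ = c₁ * mlen b₁ a L R x k / a (k+1) := by ring
  have hmn := mlen_pos hT hx n
  rcases lt_or_gt_of_ne hij with h | h
  · have hgap := sibling_gap hT (branch_spec hx k).1 hiv.1 h hjv.2
    rw [← mlen] at hgap
    have : x + 2 * mlen b₁ a L R x n ≤ y := by
      have := hxsnoc.2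
      have := hysnoc.1
      linarith [hgap2]
    rw [abs_sub_comm, abs_of_nonneg (by linarith)]
    linarith
  · have hgap := sibling_gap hT (branch_spec hx k).1 hjv.1 h hiv.2
    rw [← mlen] at hgap
    have : y + 2 * mlen b₁ a L R x n ≤ x := by
      have := hysnoc.2
      have := hxsnoc.1
      linarith [hgap2]
    rw [abs_of_nonneg (by linarith)]
    linarith

lemma ball_subset_Icc {x : ℝ} (hx : x ∈ cantorSet b₁ a L R) {n : ℕ} {r : ℝ}
    (hr : r ≤ 2 * mlen b₁ a L R x n) :
    Metric.ball x r ∩ cantorSet b₁ a L R ⊆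
      Icc (L n (branch b₁ a L R x n)) (R n (branch b₁ a L R x n)) := by
  rintro z ⟨hzb, hzc⟩
  by_contra hout
  have := separation hT hx hzc hout
  rw [Metric.mem_ball, Real.dist_eq] at hzb
  rw [abs_sub_comm] at hzb
  linarith

lemma mu_ball_le {x : ℝ} (hx : x ∈ cantorSet b₁ a L R) {n : ℕ} {r : ℝ}
    (hr : r ≤ 2 * mlen b₁ a L R x n) :
    mu b₁ a L (Metric.ball x r) ≤ ENNReal.ofReal (pphi b₁ a n) := by
  calc mu b₁ a L (Metric.ball x r)
      = mu b₁ a L (Metric.ball x r ∩ cantorSet b₁ a L R) :=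
        (measure_inter_conull (mu_compl_cantor hT)).symm
  _ ≤ mu b₁ a L (Icc (L n (branch b₁ a L R x n)) (R n (branch b₁ a L R x n))) :=
        measure_mono (ball_subset_Icc hT hx hr)
  _ = ENNReal.ofReal (pphi b₁ a n) := mu_Icc hT n _ (branch_spec hx n).1

lemma mu_ball_ge {x : ℝ} (hx : x ∈ cantorSet b₁ a L R) {n : ℕ} {r : ℝ}
    (hr : mlen b₁ a L R x n < r) :
    ENNReal.ofReal (pphi b₁ a n) ≤ mu b₁ a L (Metric.ball x r) := by
  have hsub : Icc (L n (branch b₁ a L R x n)) (R n (branch b₁ a L R x n)) ⊆ Metric.ball x r := by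
    intro z hz
    rw [Metric.mem_ball, Real.dist_eq]
    have hxm := (branch_spec hx n).2
    rw [abs_sub_lt_iff]
    constructor
    · have := hz.2; have := hxm.1
      calc z - x ≤ R n (branch b₁ a L R x n) - L n (branch b₁ a L R x n) := by linarith
      _ < r := lt_of_le_of_lt (le_refl _) (by rw [← mlen] at *; exact hr)
    · have := hz.1; have := hxm.2
      calc x - z ≤ R n (branch b₁ a L R x n) - L n (branch b₁ a L R x n) := by linarith
      _ < r := lt_of_le_of_lt (le_refl _) (by rw [← mlen] at *; exact hr)
  calc ENNReal.ofReal (pphi b₁ a n)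
      = mu b₁ a L (Icc (L n (branch b₁ a L R x n)) (R n (branch b₁ a L R x n))) :=
        (mu_Icc hT n _ (branch_spec hx n).1).symm
  _ ≤ mu b₁ a L (Metric.ball x r) := measure_mono hsub

end withT
end CantorProof

-- analytic part
namespace CantorProof
open CantorTree Set Filter MeasureTheory
open scoped ENNReal Topology

variable {b₁ c₁ d₁ d₂ : ℝ} {a : ℕ → ℝ} {L R : ∀ n : ℕ, (Fin n → ℕ) → ℝ}

section FinalAux
variable (hT : TreeFamily b₁ c₁ d₁ d₂ a L R)
include hT

lemma sum_a_lower (n : ℕ) : (n:ℝ) * (2 / b₁) ≤ ∑ i ∈ Finset.Icc 1 n, a i := by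
  have h : ∀ i ∈ Finset.Icc 1 n, 2 / b₁ ≤ a i := fun i hi =>
    hT.a_lower i (Finset.mem_Icc.1 hi).1
  calc (n:ℝ) * (2/b₁) = (Finset.Icc 1 n).card • (2/b₁) := by
        rw [Nat.card_Icc]; simp [nsmul_eq_mul]
  _ ≤ ∑ i ∈ Finset.Icc 1 n, a i := Finset.card_nsmul_le_sum _ _ _ h

lemma sum_log_le_sum (n : ℕ) :
    ∑ i ∈ Finset.Icc 1 n, Real.log (a i) ≤ ∑ i ∈ Finset.Icc 1 n, a i :=
  Finset.sum_le_sum fun i hi => by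
    have := Real.log_le_sub_one_of_pos (a_pos hT (Finset.mem_Icc.1 hi).1)
    linarith

lemma sum_log_lower (n : ℕ) :
    (n:ℝ) * Real.log (2 / b₁) ≤ ∑ i ∈ Finset.Icc 1 n, Real.log (a i) := by
  have h : ∀ i ∈ Finset.Icc 1 n, Real.log (2 / b₁) ≤ Real.log (a i) := fun i hi =>
    Real.log_le_log (by have := hT.b₁_pos; positivity) (hT.a_lower i (Finset.mem_Icc.1 hi).1)
  calc (n:ℝ) * Real.log (2/b₁) = (Finset.Icc 1 n).card • Real.log (2/b₁) := by
        rw [Nat.card_Icc]; simp [nsmul_eq_mul]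
  _ ≤ _ := Finset.card_nsmul_le_sum _ _ _ h

lemma geom_eq {n : ℕ} (hn : 1 ≤ n) :
    (∏ i ∈ Finset.Icc 1 n, a i) ^ ((1:ℝ)/(n:ℝ))
      = Real.exp ((∑ i ∈ Finset.Icc 1 n, Real.log (a i)) / n) := by
  have hpos : 0 < ∏ i ∈ Finset.Icc 1 n, a i :=
    Finset.prod_pos fun i hi => a_pos hT (Finset.mem_Icc.1 hi).1
  rw [Real.rpow_def_of_pos hpos,
    Real.log_prod (fun i hi => (a_pos hT (Finset.mem_Icc.1 hi).1).ne'),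
    mul_one_div]

lemma beta_log_nonneg {i : ℕ} (hi : 1 ≤ i) :
    0 ≤ Real.log (b₁ / 2) + Real.log (a i) := by
  have hb := hT.b₁_pos
  have ha := a_pos hT hi
  have h1 : (1:ℝ) ≤ (b₁/2) * a i := by
    have := ba_ge_two hT hi
    nlinarith
  have := Real.log_nonneg h1
  rwa [Real.log_mul (by positivity) ha.ne'] at this

lemma beta_log_le_log_kappa {i : ℕ} (hi : 1 ≤ i) :
    Real.log (b₁ / 2) + Real.log (a i) ≤ Real.log (kappa b₁ a i) := by
  have hb := hT.b₁_pos
  have ha := a_pos hT hi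
  have hhalf := kappa_ge_half hT hi
  have hpos : (0:ℝ) < (b₁/2) * a i := by positivity
  have h : (b₁/2) * a i ≤ (kappa b₁ a i : ℝ) := by nlinarith
  have := Real.log_le_log hpos h
  rwa [Real.log_mul (by positivity) ha.ne'] at this

lemma log_pphi_le (n : ℕ) :
    Real.log (pphi b₁ a n) ≤
      -((n:ℝ) * Real.log (b₁ / 2) + ∑ i ∈ Finset.Icc 1 n, Real.log (a i)) := by
  have hκpos : ∀ i ∈ Finset.Icc 1 n, ((kappa b₁ a i : ℝ))⁻¹ ≠ 0 := by
    intro i hi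
    have h0 : 0 < kappa b₁ a i := kappa_pos hT (Finset.mem_Icc.1 hi).1
    have : (0:ℝ) < (kappa b₁ a i : ℝ) := by exact_mod_cast h0
    positivity
  rw [pphi, Real.log_prod hκpos]
  have hlog : ∀ i ∈ Finset.Icc 1 n, Real.log ((kappa b₁ a i : ℝ))⁻¹
      ≤ -(Real.log (b₁/2) + Real.log (a i)) := by
    intro i hi
    rw [Real.log_inv]
    have := beta_log_le_log_kappa hT (Finset.mem_Icc.1 hi).1
    linarith
  calc ∑ i ∈ Finset.Icc 1 n, Real.log ((kappa b₁ a i : ℝ))⁻¹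
      ≤ ∑ i ∈ Finset.Icc 1 n, -(Real.log (b₁/2) + Real.log (a i)) :=
        Finset.sum_le_sum hlog
  _ = -((n:ℝ) * Real.log (b₁ / 2) + ∑ i ∈ Finset.Icc 1 n, Real.log (a i)) := by
      rw [Finset.sum_neg_distrib, Finset.sum_add_distrib, Finset.sum_const, Nat.card_Icc]
      simp [nsmul_eq_mul]

lemma nbeta_sum_nonneg (n : ℕ) :
    0 ≤ (n:ℝ) * Real.log (b₁ / 2) + ∑ i ∈ Finset.Icc 1 n, Real.log (a i) := by
  have h : 0 ≤ ∑ i ∈ Finset.Icc 1 n, (Real.log (b₁/2) + Real.log (a i)) :=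
    Finset.sum_nonneg fun i hi => beta_log_nonneg hT (Finset.mem_Icc.1 hi).1
  rw [Finset.sum_add_distrib, Finset.sum_const, Nat.card_Icc] at h
  simpa [nsmul_eq_mul] using h

end FinalAux
end CantorProof

-- final liminf bound
namespace CantorProof
open CantorTree Set Filter MeasureTheory
open scoped ENNReal Topology

variable {b₁ c₁ d₁ d₂ : ℝ} {a : ℕ → ℝ} {L R : ∀ n : ℕ, (Fin n → ℕ) → ℝ}

section Final
variable (hT : TreeFamily b₁ c₁ d₁ d₂ a L R)
include hT

set_option maxHeartbeats 1000000 in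
lemma eventually_ratio_ge
    (hbdd : IsBoundedUnder (· ≤ ·) atTop
      (fun n : ℕ => (∑ i ∈ Finset.Icc 1 n, a i) / (n : ℝ)))
    {x : ℝ} (hx : x ∈ cantorSet b₁ a L R) {d : ℝ}
    (hd : d < (Real.log (b₁ / 2) +
        Real.log (liminf
          (fun n : ℕ => (∏ i ∈ Finset.Icc 1 n, a i) ^ ((1 : ℝ) / (n : ℝ))) atTop)) /
      (d₂ * limsup (fun n : ℕ => (∑ i ∈ Finset.Icc 1 n, a i) / (n : ℝ)) atTop)) :
    ∀ᶠ r in 𝓝[>] (0:ℝ), d ≤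
      Real.log ((mu b₁ a L) (Metric.ball x r)).toReal / Real.log r := by
  classical
  have hb := hT.b₁_pos
  have hd₂ : 0 < d₂ := lt_of_lt_of_le hT.d₁_pos hT.d₁_le_d₂
  have h2b : (0:ℝ) < 2 / b₁ := by positivity
  have hprob : IsProbabilityMeasure (mu b₁ a L) := mu_prob hT
  -- nonnegativity of the ratio, used in the case d ≤ 0
  rcases le_or_gt d 0 with hd0 | hd0
  · filter_upwards [Ioo_mem_nhdsGT (one_pos : (0:ℝ) < 1)] with r hr
    refine le_trans hd0 (div_nonneg_of_nonpos ?_ ?_)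
    · refine Real.log_nonpos ENNReal.toReal_nonneg ?_
      have h1 : (mu b₁ a L) (Metric.ball x r) ≤ 1 := prob_le_one
      calc ((mu b₁ a L) (Metric.ball x r)).toReal ≤ (1:ℝ≥0∞).toReal :=
            ENNReal.toReal_mono ENNReal.one_ne_top h1
      _ = 1 := by simp
    · exact (Real.log_neg hr.1 hr.2).le
  -- main case : 0 < d
  set S : ℕ → ℝ := fun n => ∑ i ∈ Finset.Icc 1 n, a i with hSdef
  set P : ℕ → ℝ := fun n => ∑ i ∈ Finset.Icc 1 n, Real.log (a i) with hPdef
  set G : ℕ → ℝ := fun n => (∏ i ∈ Finset.Icc 1 n, a i) ^ ((1:ℝ)/(n:ℝ)) with hGdef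
  set β := Real.log (b₁ / 2) with hβdef
  set Astar := limsup (fun n : ℕ => S n / (n:ℝ)) atTop with hAdef
  set Gstar := liminf G atTop with hGstardef
  set γ := Real.log Gstar with hγdef
  have hGn : ∀ n : ℕ, 1 ≤ n → G n = Real.exp (P n / n) := fun n hn => geom_eq hT hn
  have hGlb : ∀ᶠ n : ℕ in atTop, 2 / b₁ ≤ G n := by
    filter_upwards [eventually_ge_atTop 1] with n hn
    rw [hGn n hn]
    have hnR : (0:ℝ) < (n:ℝ) := by exact_mod_cast hn
    have h1 : Real.log (2/b₁) ≤ P n / n := by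
      rw [le_div_iff₀ hnR]
      have := sum_log_lower hT n
      linarith
    calc 2/b₁ = Real.exp (Real.log (2/b₁)) := (Real.exp_log h2b).symm
    _ ≤ _ := Real.exp_le_exp.2 h1
  have hGub : IsBoundedUnder (· ≤ ·) atTop G := by
    obtain ⟨M, hM⟩ := hbdd
    rw [eventually_map] at hM
    refine ⟨Real.exp M, ?_⟩
    rw [eventually_map]
    filter_upwards [hM, eventually_ge_atTop 1] with n h1 h2
    rw [hGn n h2]
    have hnR : (0:ℝ) < (n:ℝ) := by exact_mod_cast h2
    refine Real.exp_le_exp.2 (le_trans ?_ h1)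
    exact div_le_div_of_nonneg_right (sum_log_le_sum hT n) hnR.le
  have hGbb : IsBoundedUnder (· ≥ ·) atTop G := ⟨2/b₁, by rw [eventually_map]; exact hGlb⟩
  have hGstar_lb : 2 / b₁ ≤ Gstar :=
    le_liminf_of_le hGub.isCoboundedUnder_ge hGlb
  have hGpos : 0 < Gstar := lt_of_lt_of_le h2b hGstar_lb
  have hAstar_lb : 2 / b₁ ≤ Astar := by
    refine le_limsup_of_frequently_le ?_ hbdd
    refine Eventually.frequently ?_
    filter_upwards [eventually_ge_atTop 1] with n hn
    have hnR : (0:ℝ) < (n:ℝ) := by exact_mod_cast hn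
    rw [le_div_iff₀ hnR]
    have := sum_a_lower hT n
    linarith
  have hApos : 0 < Astar := lt_of_lt_of_le h2b hAstar_lb
  have hdA : 0 < d₂ * Astar := by positivity
  -- hd says d < (β + γ) / (d₂ * Astar)
  have hdD : d * (d₂ * Astar) < β + γ := by
    rw [← lt_div_iff₀ hdA]
    exact hd
  -- choose ε'
  set W := d * d₂ + 1 with hWdef
  have hW : 0 < W := by
    rw [hWdef]
    nlinarith [mul_pos hd0 hd₂]
  set h0 := (β + γ) - d * (d₂ * Astar) with hh0def
  have hh0 : 0 < h0 := by rw [hh0def]; linarith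
  set ε' := h0 / (2 * W) with hε'def
  have hε'pos : 0 < ε' := by positivity
  have hWε : ε' * W = h0 / 2 := by
    rw [hε'def]
    field_simp
  have hkey : d * (d₂ * (Astar + ε')) + ε' < β + γ := by
    have hexp : d * (d₂ * (Astar + ε')) + ε' = d * (d₂ * Astar) + ε' * W := by
      rw [hWdef]; ring
    rw [hexp, hWε, hh0def]
    linarith
  -- eventual bounds in n
  have hev1 : ∀ᶠ n : ℕ in atTop, (γ - ε') * n ≤ P n := by
    have hlt : Real.exp (γ - ε') < Gstar := by
      calc Real.exp (γ - ε') < Real.exp γ := Real.exp_lt_exp.2 (by linarith)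
      _ = Gstar := by rw [hγdef, Real.exp_log hGpos]
    have := eventually_lt_of_lt_liminf (u := G) (by rw [← hGstardef]; exact hlt) hGbb
    filter_upwards [this, eventually_ge_atTop 1] with n h1 h2
    rw [hGn n h2] at h1
    have h3 : γ - ε' < P n / n := by
      have := Real.exp_lt_exp.1 h1
      linarith
    have hnR : (0:ℝ) < (n:ℝ) := by exact_mod_cast h2
    rw [← le_div_iff₀ hnR] at *
    linarith
  have hev2 : ∀ᶠ n : ℕ in atTop, S n ≤ ((n:ℝ)) * (Astar + ε') := by
    have := eventually_lt_of_limsup_lt (u := fun n : ℕ => S n / (n:ℝ))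
      (b := Astar + ε') (by rw [← hAdef]; linarith) hbdd
    filter_upwards [this, eventually_ge_atTop 1] with n h1 h2
    have hnR : (0:ℝ) < (n:ℝ) := by exact_mod_cast h2
    rw [div_lt_iff₀ hnR] at h1
    have hcomm : (Astar + ε') * (n:ℝ) = (n:ℝ) * (Astar + ε') := mul_comm _ _
    linarith
  obtain ⟨n₁, hn₁⟩ := eventually_atTop.1 ((hev1.and hev2).and (eventually_ge_atTop 1))
  -- threshold from the archimedean property
  set C₀ := max 0 (-Real.log (2 * mlen b₁ a L R x 0)) with hC₀def
  have hC₀ : 0 ≤ C₀ := le_max_left _ _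
  set ρ := (β + γ - ε') - d * (d₂ * (Astar + ε')) with hρdef
  have hρpos : 0 < ρ := by rw [hρdef]; linarith
  set K := d * (d₂ * (Astar + ε') + C₀) with hKdef
  obtain ⟨n₃, hn₃⟩ := exists_nat_ge (K / ρ)
  set N := max (max n₁ n₃) 1 with hNdef
  have hmlN : 0 < mlen b₁ a L R x N := mlen_pos hT hx N
  set δ := min 1 (2 * mlen b₁ a L R x N) with hδdef
  have hδpos : 0 < δ := lt_min one_pos (by linarith)
  filter_upwards [Ioo_mem_nhdsGT hδpos] with r hr
  obtain ⟨hr0, hrδ⟩ := hr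
  have hr1 : r < 1 := lt_of_lt_of_le hrδ (min_le_left _ _)
  have hrN : r < 2 * mlen b₁ a L R x N := lt_of_lt_of_le hrδ (min_le_right _ _)
  -- choose the level n
  have hexP : ∃ k, 2 * mlen b₁ a L R x k < r := by
    obtain ⟨k, hk⟩ := mlen_tendsto_zero hT hx (show (0:ℝ) < r/2 by linarith)
    exact ⟨k, by linarith⟩
  have hfindN : N < Nat.find hexP := by
    by_contra hcon
    push_neg at hcon
    have hsp := Nat.find_spec hexP
    have : mlen b₁ a L R x N ≤ mlen b₁ a L R x (Nat.find hexP) := mlen_anti hT hx hcon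
    linarith
  obtain ⟨n, hfind⟩ : ∃ n, Nat.find hexP = n + 1 := ⟨Nat.find hexP - 1, by omega⟩
  have hnN : N ≤ n := by omega
  have hn1 : n₁ ≤ n := by
    have : n₁ ≤ N := le_trans (le_max_left _ _) (le_max_left _ _)
    omega
  have hn3 : n₃ ≤ n := by
    have : n₃ ≤ N := le_trans (le_max_right _ _) (le_max_left _ _)
    omega
  have hnge1 : 1 ≤ n := by
    have : 1 ≤ N := le_max_right _ _
    omega
  have hrn : r ≤ 2 * mlen b₁ a L R x n := by
    have := Nat.find_min hexP (show n < Nat.find hexP by omega)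
    linarith [not_lt.1 this]
  have hrn1 : 2 * mlen b₁ a L R x (n+1) < r := by
    have := Nat.find_spec hexP
    rwa [hfind] at this
  have hml1 : 0 < mlen b₁ a L R x (n+1) := mlen_pos hT hx (n+1)
  -- measure bounds
  have hble := mu_ball_le hT hx hrn
  have hbge := mu_ball_ge hT hx (show mlen b₁ a L R x (n+1) < r by linarith)
  set μB := (mu b₁ a L) (Metric.ball x r) with hμBdef
  have hfin : μB ≠ ⊤ := measure_ne_top _ _
  have hμpos : 0 < μB.toReal := by
    refine ENNReal.toReal_pos ?_ hfin
    intro h0'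
    rw [h0'] at hbge
    exact (ENNReal.ofReal_pos.2 (pphi_pos hT (n+1))).ne' (le_antisymm hbge zero_le)
  have hμle : μB.toReal ≤ pphi b₁ a n :=
    ENNReal.toReal_le_of_le_ofReal (pphi_pos hT n).le hble
  -- log bounds
  have hlogμ : Real.log μB.toReal ≤ -((n:ℝ) * β + P n) :=
    (Real.log_le_log hμpos hμle).trans (log_pphi_le hT n)
  have hNn : 0 ≤ (n:ℝ) * β + P n := nbeta_sum_nonneg hT n
  have hlogr : Real.log r < 0 := Real.log_neg hr0 hr1
  -- lower bound on log r
  have hml0 : 0 < mlen b₁ a L R x 0 := mlen_pos hT hx 0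
  have hlogr_lb : Real.log (2 * mlen b₁ a L R x 0) - d₂ * S (n+1) < Real.log r := by
    have hlow := mlen_lower hT hx (n+1)
    have hlt : 2 * (mlen b₁ a L R x 0 * Real.exp (-d₂ * S (n+1))) < r := by
      calc 2 * (mlen b₁ a L R x 0 * Real.exp (-d₂ * S (n+1)))
          ≤ 2 * mlen b₁ a L R x (n+1) := by linarith
      _ < r := hrn1
    have hpos : (0:ℝ) < 2 * (mlen b₁ a L R x 0 * Real.exp (-d₂ * S (n+1))) := by positivity
    have := Real.log_lt_log hpos hlt
    have heq : Real.log (2 * (mlen b₁ a L R x 0 * Real.exp (-d₂ * S (n+1))))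
        = Real.log (2 * mlen b₁ a L R x 0) + (-d₂ * S (n+1)) := by
      rw [show 2 * (mlen b₁ a L R x 0 * Real.exp (-d₂ * S (n+1)))
          = (2 * mlen b₁ a L R x 0) * Real.exp (-d₂ * S (n+1)) by ring,
        Real.log_mul (by positivity) (Real.exp_pos _).ne', Real.log_exp]
    rw [heq] at this
    linarith
  -- the denominators
  have hSn1 : S (n+1) ≤ ((n:ℝ)+1) * (Astar + ε') := by
    have := (hn₁ (n+1) (by omega)).1.2
    calc S (n+1) ≤ ((n+1:ℕ):ℝ) * (Astar + ε') := this
    _ = ((n:ℝ)+1) * (Astar + ε') := by push_cast; ring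
  have hB3pos : 0 < d₂ * (((n:ℝ)+1) * (Astar + ε')) + C₀ := by
    have : 0 < ((n:ℝ)+1) := by positivity
    have : 0 < d₂ * (((n:ℝ)+1) * (Astar + ε')) := by positivity
    linarith
  have hBle : -Real.log r ≤ d₂ * (((n:ℝ)+1) * (Astar + ε')) + C₀ := by
    have h1 : -Real.log r < d₂ * S (n+1) - Real.log (2 * mlen b₁ a L R x 0) := by linarith
    have h2 : -Real.log (2 * mlen b₁ a L R x 0) ≤ C₀ := le_max_right _ _
    have h3 : d₂ * S (n+1) ≤ d₂ * (((n:ℝ)+1) * (Astar + ε')) := by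
      exact mul_le_mul_of_nonneg_left hSn1 hd₂.le
    linarith
  have hBpos : 0 < -Real.log r := by linarith
  -- chain of inequalities
  have hPn : (γ - ε') * n ≤ P n := (hn₁ n hn1).1.1
  have main1 : ((n:ℝ) * β + P n) / (d₂ * (((n:ℝ)+1) * (Astar + ε')) + C₀)
      ≤ (-Real.log μB.toReal) / (-Real.log r) :=
    div_le_div₀ (by linarith) (by linarith) hBpos hBle
  have main2 : ((n:ℝ) * (β + γ - ε')) / (d₂ * (((n:ℝ)+1) * (Astar + ε')) + C₀)
      ≤ ((n:ℝ) * β + P n) / (d₂ * (((n:ℝ)+1) * (Astar + ε')) + C₀) :=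
    div_le_div_of_nonneg_right (by
      have hring : (n:ℝ) * (β + γ - ε') = (n:ℝ) * β + (γ - ε') * (n:ℝ) := by ring
      linarith) hB3pos.le
  have main3 : d ≤ ((n:ℝ) * (β + γ - ε')) / (d₂ * (((n:ℝ)+1) * (Astar + ε')) + C₀) := by
    rw [le_div_iff₀ hB3pos]
    have hnρ : K ≤ (n:ℝ) * ρ := by
      have h1 : K ≤ (n₃:ℝ) * ρ := (div_le_iff₀ hρpos).1 hn₃
      have h2 : (n₃:ℝ) ≤ (n:ℝ) := by exact_mod_cast hn3
      calc K ≤ (n₃:ℝ) * ρ := h1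
      _ ≤ (n:ℝ) * ρ := mul_le_mul_of_nonneg_right h2 hρpos.le
    rw [hKdef, hρdef] at hnρ
    have hring : d * (d₂ * (((n:ℝ)+1) * (Astar + ε')) + C₀) - (n:ℝ) * (β + γ - ε')
        = d * (d₂ * (Astar + ε') + C₀)
          - (n:ℝ) * ((β + γ - ε') - d * (d₂ * (Astar + ε'))) := by ring
    linarith
  have hfinal : d ≤ (-Real.log μB.toReal) / (-Real.log r) :=
    le_trans main3 (le_trans main2 main1)
  rwa [neg_div_neg_eq] at hfinal

end Final
end CantorProof

/-- There is a Borel probability measure `μ` supported on the Cantor set `𝒞`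
with `μ(𝒞 ∩ J_θ) = 1/(κ₁⋯κₙ)` for every word `θ` of length `n`, and whose
lower local dimension at every `x ∈ 𝒞` is at least
`(log(b₁/2) + log G_*)/(d₂ · A*)`. -/
theorem cantorSet_exists_measure_local_dimension
    (b₁ c₁ d₁ d₂ : ℝ) (a : ℕ → ℝ) (L R : ∀ n : ℕ, (Fin n → ℕ) → ℝ)
    (hT : TreeFamily b₁ c₁ d₁ d₂ a L R)
    (hbdd : Filter.IsBoundedUnder (· ≤ ·) Filter.atTop
      (fun n : ℕ => (∑ i ∈ Finset.Icc 1 n, a i) / (n : ℝ))) :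
    ∃ μ : MeasureTheory.Measure ℝ, MeasureTheory.IsProbabilityMeasure μ ∧
      μ (cantorSet b₁ a L R)ᶜ = 0 ∧
      (∀ (n : ℕ) (θ : Fin n → ℕ), ValidWord b₁ a n θ →
        μ (cantorSet b₁ a L R ∩ Set.Icc (L n θ) (R n θ)) =
          1 / ∏ i ∈ Finset.Icc 1 n, (kappa b₁ a i : ℝ≥0∞)) ∧
      ∀ x ∈ cantorSet b₁ a L R,
        (((Real.log (b₁ / 2) +
              Real.log (Filter.liminf
                (fun n : ℕ => (∏ i ∈ Finset.Icc 1 n, a i) ^ ((1 : ℝ) / (n : ℝ)))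
                Filter.atTop)) /
            (d₂ * Filter.limsup
              (fun n : ℕ => (∑ i ∈ Finset.Icc 1 n, a i) / (n : ℝ))
              Filter.atTop) : ℝ) : EReal) ≤
          Filter.liminf
            (fun r : ℝ =>
              ((Real.log (μ (Metric.ball x r)).toReal / Real.log r : ℝ) : EReal))
            (nhdsWithin 0 (Set.Ioi 0)) := by
  refine ⟨CantorProof.mu b₁ a L, CantorProof.mu_prob hT, CantorProof.mu_compl_cantor hT,
    fun n θ hθ => CantorProof.mu_cantor_Icc hT n θ hθ, ?_⟩
  intro x hx
  refine le_of_forall_lt fun c hc => ?_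
  obtain ⟨e, hce, heD⟩ := exists_between hc
  lift e to ℝ using ⟨(heD.trans_le le_top).ne, (lt_of_le_of_lt bot_le hce).ne'⟩
  refine lt_of_lt_of_le hce ?_
  have hd := EReal.coe_lt_coe_iff.1 heD
  have hev := CantorProof.eventually_ratio_ge hT hbdd hx hd
  refine Filter.le_liminf_of_le (by isBoundedDefault) ?_
  exact hev.mono fun r h => EReal.coe_le_coe_iff.2 h
end
end

section
/- In the tree setting described in the context, let x ∈ 𝒞 with coding sequence ω ∈ ∏_{i≥1}{1,…,κᵢ} (i.e. {x} = ⋂_{n≥0} J_{ω|ₙ}, where ω|ₙ = ω₁⋯ωₙ), let r > 0, and let n ≥ 1 be such that J_{ω|ₙ} ⊆ B(x,r) while J_{ω|ₙ₋₁} ⊄ B(x,r). Then the ball B(x,r) is disjoint from J_θ for every word θ of length n−1 with θ ≠ ω|ₙ₋₁; in particular B(x,r) ∩ 𝒞 ⊆ J_{ω|ₙ₋₁}. -/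
noncomputable section

open CantorTree

namespace BallAux

variable {b₁ c₁ d₁ d₂ : ℝ} {a : ℕ → ℝ} {L R : ∀ n : ℕ, (Fin n → ℕ) → ℝ}

/-- prefix of a word -/
def pre {n : ℕ} (θ : Fin n → ℕ) (m : ℕ) (h : m ≤ n) : Fin m → ℕ :=
  fun j => θ ⟨j, lt_of_lt_of_le j.isLt h⟩

lemma pre_valid {n : ℕ} {θ : Fin n → ℕ} (hθ : ValidWord b₁ a n θ) (m : ℕ) (h : m ≤ n) :
    ValidWord b₁ a m (pre θ m h) := fun j => hθ _

lemma pre_self {n : ℕ} (θ : Fin n → ℕ) (h : n ≤ n) : pre θ n h = θ := by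
  funext j; simp [pre]

lemma pre_succ {n : ℕ} (θ : Fin n → ℕ) (m : ℕ) (h : m < n) :
    pre θ (m + 1) h = Fin.snoc (pre θ m h.le) (θ ⟨m, h⟩) := by
  funext j
  refine Fin.lastCases ?_ ?_ j
  · rw [Fin.snoc_last]; rfl
  · intro j
    rw [Fin.snoc_castSucc]; rfl

lemma valid_snoc {n : ℕ} {θ : Fin n → ℕ} (hθ : ValidWord b₁ a n θ) {i : ℕ}
    (hi1 : 1 ≤ i) (hi2 : i ≤ kappa b₁ a (n + 1)) :
    ValidWord b₁ a (n + 1) (Fin.snoc θ i) := by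
  intro j
  refine Fin.lastCases ?_ ?_ j
  · simp only [Fin.snoc_last, Fin.val_last]
    exact ⟨hi1, hi2⟩
  · intro j
    simp only [Fin.snoc_castSucc, Fin.coe_castSucc]
    exact hθ j

lemma nest_chain (hT : TreeFamily b₁ c₁ d₁ d₂ a L R) {n : ℕ} {θ : Fin n → ℕ}
    (hθ : ValidWord b₁ a n θ) {k : ℕ} (hkn : k ≤ n) :
    ∀ m (hkm : k ≤ m) (hmn : m ≤ n),
      L k (pre θ k hkn) ≤ L m (pre θ m hmn) ∧
      R m (pre θ m hmn) ≤ R k (pre θ k hkn) := by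
  intro m
  induction m with
  | zero =>
      intro hkm hmn
      have : k = 0 := Nat.le_zero.mp hkm
      subst this
      exact ⟨le_rfl, le_rfl⟩
  | succ m ih =>
      intro hkm hmn
      rcases Nat.eq_or_lt_of_le hkm with hk | hk
      · subst hk; exact ⟨le_rfl, le_rfl⟩
      · have hkm' : k ≤ m := Nat.lt_succ_iff.mp hk
        have hm : m < n := hmn
        have hlet := hθ ⟨m, hm⟩
        have step := hT.nested m (pre θ m hm.le) (pre_valid hθ m hm.le)
          (θ ⟨m, hm⟩) hlet.1 hlet.2
        have ih' := ih hkm' hm.le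
        have hpre : pre θ (m + 1) hmn = Fin.snoc (pre θ m hm.le) (θ ⟨m, hm⟩) :=
          pre_succ θ m hm
        rw [hpre]
        exact ⟨ih'.1.trans step.1, step.2.trans ih'.2⟩

lemma sep (hT : TreeFamily b₁ c₁ d₁ d₂ a L R) {k : ℕ} {τ : Fin k → ℕ}
    (hτ : ValidWord b₁ a k τ) {i : ℕ} (hi : 1 ≤ i) :
    ∀ j, i < j → j ≤ kappa b₁ a (k + 1) →
      R (k + 1) (Fin.snoc τ i) + c₁ * (R k τ - L k τ) / a (k + 1) ≤
        L (k + 1) (Fin.snoc τ j) := by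
  intro j
  induction j with
  | zero => intro h _; omega
  | succ j ih =>
      intro hij hj
      rcases Nat.eq_or_lt_of_le (Nat.lt_succ_iff.mp hij) with hie | hie
      · subst hie
        have hg := hT.gap k τ hτ i hi hj
        linarith [hg.2]
      · have hj1 : 1 ≤ j := le_trans hi hie.le
        have hjk : j ≤ kappa b₁ a (k + 1) := le_trans (Nat.le_succ j) hj
        have hih := ih hie hjk
        have hlen := hT.len_pos (k + 1) (Fin.snoc τ j) (valid_snoc hτ hj1 hjk)
        have hg := hT.gap k τ hτ j hj1 hj
        linarith [hg.1]

end BallAux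

/-- **Claim.** Let `x ∈ 𝒞` have coding sequence `ω` (so `{x} = ⋂ₙ J_{ω|ₙ}`),
let `r > 0`, and let the level be such that `J_{ω|ₙ₊₁} ⊆ B(x,r)` while
`J_{ω|ₙ} ⊄ B(x,r)`. Then `B(x,r)` meets no band of generation `n` other than
`J_{ω|ₙ}`; in particular `B(x,r) ∩ 𝒞 ⊆ J_{ω|ₙ}`. -/
theorem ball_meets_only_one_band
    (b₁ c₁ d₁ d₂ : ℝ) (a : ℕ → ℝ) (L R : ∀ n : ℕ, (Fin n → ℕ) → ℝ)
    (hT : TreeFamily b₁ c₁ d₁ d₂ a L R)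
    (x : ℝ) (hx : x ∈ cantorSet b₁ a L R)
    (ω : ℕ → ℕ) (hω : ∀ i : ℕ, 1 ≤ ω i ∧ ω i ≤ kappa b₁ a (i + 1))
    (hcode : {x} = ⋂ n : ℕ,
      Set.Icc (L n (fun j : Fin n => ω j)) (R n (fun j : Fin n => ω j)))
    (r : ℝ) (hr : 0 < r) (n : ℕ)
    (hsub : Set.Icc (L (n + 1) (fun j : Fin (n + 1) => ω j))
        (R (n + 1) (fun j : Fin (n + 1) => ω j)) ⊆ Metric.ball x r)
    (hnsub : ¬ Set.Icc (L n (fun j : Fin n => ω j))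
        (R n (fun j : Fin n => ω j)) ⊆ Metric.ball x r) :
    (∀ θ : Fin n → ℕ, ValidWord b₁ a n θ → θ ≠ (fun j : Fin n => ω j) →
      Disjoint (Metric.ball x r) (Set.Icc (L n θ) (R n θ))) ∧
    Metric.ball x r ∩ cantorSet b₁ a L R ⊆
      Set.Icc (L n (fun j : Fin n => ω j)) (R n (fun j : Fin n => ω j)) := by
  classical
  have hωvalid : ∀ m : ℕ, ValidWord b₁ a m (fun j : Fin m => ω j) := fun m i => hω i
  have hxall : x ∈ ⋂ m : ℕ,
      Set.Icc (L m (fun j : Fin m => ω j)) (R m (fun j : Fin m => ω j)) := by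
    rw [← hcode]; exact Set.mem_singleton x
  have hxmem : ∀ m : ℕ,
      x ∈ Set.Icc (L m (fun j : Fin m => ω j)) (R m (fun j : Fin m => ω j)) :=
    fun m => Set.mem_iInter.mp hxall m
  -- r is at most the length of J_{ω|n}
  have hrlen : r ≤ R n (fun j : Fin n => ω j) - L n (fun j : Fin n => ω j) := by
    obtain ⟨y, hy, hyb⟩ := Set.not_subset.mp hnsub
    have hxn := hxmem n
    have hd : r ≤ dist y x := not_lt.mp (fun h => hyb (Metric.mem_ball.mpr h))
    rw [Real.dist_eq] at hd
    have habs : |y - x| ≤ R n (fun j : Fin n => ω j) - L n (fun j : Fin n => ω j) :=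
      abs_le.mpr ⟨by linarith [hy.1, hy.2, hxn.1, hxn.2],
        by linarith [hy.1, hy.2, hxn.1, hxn.2]⟩
    linarith
  have hdisj : ∀ θ : Fin n → ℕ, ValidWord b₁ a n θ → θ ≠ (fun j : Fin n => ω j) →
      Disjoint (Metric.ball x r) (Set.Icc (L n θ) (R n θ)) := by
    intro θ hθ hne
    rw [Set.disjoint_left]
    intro z hzb hzI
    -- first index where θ and ω differ
    have hex : ∃ m : ℕ, ∃ hm : m < n, θ ⟨m, hm⟩ ≠ ω m := by
      by_contra h
      push_neg at h
      exact hne (funext fun j => by simpa using h j.val j.isLt)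
    set k := Nat.find hex with hk
    obtain ⟨hkn, hkne⟩ := Nat.find_spec hex
    have hmin : ∀ m (hm : m < k) (hmn : m < n), θ ⟨m, hmn⟩ = ω m := by
      intro m hm hmn
      have := Nat.find_min hex hm
      push_neg at this
      exact this hmn
    -- prefix agreement
    have hpreeq : BallAux.pre θ k hkn.le = fun j : Fin k => ω j := by
      funext j
      exact hmin j.val j.isLt _
    set τ : Fin k → ℕ := fun j : Fin k => ω j with hτdef
    have hτ : ValidWord b₁ a k τ := hωvalid k
    set A := a (k + 1) with hA
    have hApos : 0 < A := lt_of_lt_of_le (div_pos two_pos hT.b₁_pos)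
      (hT.a_lower (k + 1) (Nat.le_add_left 1 k))
    set g := c₁ * (R k τ - L k τ) / A with hg
    have hJk : 0 < R k τ - L k τ := sub_pos.mpr (hT.len_pos k τ hτ)
    -- the ω-side child at level k+1
    have hωsucc : (fun j : Fin (k + 1) => ω j) = Fin.snoc τ (ω k) := by
      have := BallAux.pre_succ (fun j : Fin (k + 1) => ω j) k (Nat.lt_succ_self k)
      rw [BallAux.pre_self] at this
      convert this using 2
      rfl
    -- x lies in the child snoc τ (ω k)
    have hxchild : x ∈ Set.Icc (L (k + 1) (Fin.snoc τ (ω k)))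
        (R (k + 1) (Fin.snoc τ (ω k))) := by
      rw [← hωsucc]; exact hxmem (k + 1)
    -- z lies in the child snoc τ (θ ⟨k, hkn⟩)
    have hθsucc : BallAux.pre θ (k + 1) hkn = Fin.snoc τ (θ ⟨k, hkn⟩) := by
      rw [BallAux.pre_succ θ k hkn, hpreeq]
    have hnest := BallAux.nest_chain hT hθ (Nat.succ_le_of_lt hkn) n
      (Nat.succ_le_of_lt hkn) le_rfl
    rw [BallAux.pre_self, hθsucc] at hnest
    have hzchild : z ∈ Set.Icc (L (k + 1) (Fin.snoc τ (θ ⟨k, hkn⟩)))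
        (R (k + 1) (Fin.snoc τ (θ ⟨k, hkn⟩))) :=
      ⟨le_trans hnest.1 hzI.1, le_trans hzI.2 hnest.2⟩
    -- length chain : r ≤ exp(-d₁ A) * |J_k|
    have hlet := hω k
    have hratio := (hT.ratio k τ hτ (ω k) hlet.1 hlet.2).2
    have hnestω := BallAux.nest_chain hT (hωvalid n) (Nat.succ_le_of_lt hkn) n
      (Nat.succ_le_of_lt hkn) le_rfl
    rw [BallAux.pre_self] at hnestω
    have hpreω : BallAux.pre (fun j : Fin n => ω j) (k + 1) (Nat.succ_le_of_lt hkn)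
        = Fin.snoc τ (ω k) := by
      rw [BallAux.pre_succ (fun j : Fin n => ω j) k hkn, hτdef]
      rfl
    rw [hpreω] at hnestω
    have hrE : r ≤ Real.exp (-d₁ * A) * (R k τ - L k τ) := by
      calc r ≤ R n (fun j : Fin n => ω j) - L n (fun j : Fin n => ω j) := hrlen
        _ ≤ R (k + 1) (Fin.snoc τ (ω k)) - L (k + 1) (Fin.snoc τ (ω k)) := by
            linarith [hnestω.1, hnestω.2]
        _ ≤ Real.exp (-d₁ * A) * (R k τ - L k τ) := hratio
    -- exp bound : exp(-d₁ A) * (2 A) ≤ c₁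
    have haexp := hT.a_exp (k + 1) (Nat.le_add_left 1 k)
    have hexp1 : Real.exp (-d₁ * A) * Real.exp (d₁ * A) = 1 := by
      rw [← Real.exp_add]; ring_nf; exact Real.exp_zero
    have hEpos : 0 < Real.exp (-d₁ * A) := Real.exp_pos _
    have hE2A : Real.exp (-d₁ * A) * (2 * A) ≤ c₁ := by
      have h2 := mul_le_mul_of_nonneg_left haexp hEpos.le
      rw [← hA] at h2
      calc Real.exp (-d₁ * A) * (2 * A)
          ≤ Real.exp (-d₁ * A) * (c₁ * Real.exp (d₁ * A)) := h2
        _ = c₁ := by rw [mul_comm c₁, ← mul_assoc, hexp1, one_mul]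
    -- g ≥ 2r
    have hg2r : 2 * r ≤ g := by
      rw [hg, le_div_iff₀ hApos]
      nlinarith [hrE, hJk.le, hEpos.le]
    -- separation between the two children
    have hzb' := Metric.mem_ball.mp hzb
    rw [Real.dist_eq] at hzb'
    have hzx := abs_lt.mp hzb'
    have hθlet := hθ ⟨k, hkn⟩
    rcases lt_trichotomy (ω k) (θ ⟨k, hkn⟩) with hlt | heq | hgt
    · have hsep := BallAux.sep hT hτ hlet.1 (θ ⟨k, hkn⟩) hlt hθlet.2
      have : g ≤ z - x := by
        have h1 : x ≤ R (k + 1) (Fin.snoc τ (ω k)) := hxchild.2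
        have h2 : L (k + 1) (Fin.snoc τ (θ ⟨k, hkn⟩)) ≤ z := hzchild.1
        linarith
      linarith [hzx.2]
    · exact hkne heq.symm
    · have hsep := BallAux.sep hT hτ hθlet.1 (ω k) hgt hlet.2
      have : g ≤ x - z := by
        have h1 : z ≤ R (k + 1) (Fin.snoc τ (θ ⟨k, hkn⟩)) := hzchild.2
        have h2 : L (k + 1) (Fin.snoc τ (ω k)) ≤ x := hxchild.1
        linarith
      linarith [hzx.1]
  refine ⟨hdisj, ?_⟩
  rintro z ⟨hzb, hzC⟩
  have hzn := Set.mem_iInter.mp hzC n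
  simp only [Set.mem_iUnion] at hzn
  obtain ⟨θ, hθ, hz⟩ := hzn
  by_cases hne : θ = fun j : Fin n => ω j
  · rw [← hne]; exact hz
  · exact absurd hz (Set.disjoint_left.mp (hdisj θ hθ hne) hzb)
end
end
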